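/- Let M be a topological space with a Borel measure μ and let Ω : M × M → ℂ be continuous and satisfy propagator conditions (1), (3), (4) and (5). Suppose Ψ ∈ L²(M, μ) satisfies Ψ(x) = ∫_M Ψ(y)Ω(y,x) dμ(y) for μ-almost every x (i.e. Ψ is in the range of the projection P_Ω). Then the function Φ(x) := ∫_M Ψ(y)Ω(y,x) dμ(y) is everywhere defined and continuous, Φ = Ψ μ-almost everywhere, and |Φ(x)| ≤ ‖Ψ‖_{L²(μ)} for every x ∈ M; in particular Ψ is essentially bounded with a continuous representative. -/

import Mathlib

open MeasureTheory

/-- If `Ω` is a continuous propagator (conditions (1), (3), (4), (5))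
on a topological space with a Borel measure and `Ψ ∈ L²(M,μ)` is in the range of the
projection `P_Ω` (i.e. `Ψ(x) = ∫ Ψ(y)Ω(y,x) dμ(y)` a.e.), then the everywhere-defined
function `Φ(x) = ∫ Ψ(y)Ω(y,x) dμ(y)` is continuous, agrees with `Ψ` a.e., and is
bounded by `‖Ψ‖_{L²}`; in particular `Ψ` has a continuous bounded representative. -/
theorem physical_section_continuous_bounded
    {M : Type*} [TopologicalSpace M] [MeasurableSpace M] [BorelSpace M]
    (μ : Measure M)
    (Ω : M → M → ℂ)
    (hΩcont : Continuous fun p : M × M => Ω p.1 p.2)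
    (h1 : ∀ x, Ω x x = 1)
    (h3 : ∀ x y, Ω x y = (starRingEnd ℂ) (Ω y x))
    (h4int : ∀ x y, Integrable (fun z => Ω x z * Ω z y) μ)
    (h4 : ∀ x y, ∫ z, Ω x z * Ω z y ∂μ = Ω x y)
    (h5 : ∃ C : ℝ, ∀ x, Integrable (fun y => ‖Ω x y‖) μ ∧ (∫ y, ‖Ω x y‖ ∂μ) ≤ C)
    (Ψ : Lp ℂ 2 μ)
    (hΨ : ∀ᵐ x ∂μ, Ψ x = ∫ y, Ψ y * Ω y x ∂μ) :
    Continuous (fun x => ∫ y, Ψ y * Ω y x ∂μ) ∧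
    (∀ᵐ x ∂μ, (∫ y, Ψ y * Ω y x ∂μ) = Ψ x) ∧
    ∀ x, ‖∫ y, Ψ y * Ω y x ∂μ‖ ≤ ‖Ψ‖ := by
  classical
  have hcontx : ∀ x : M, Continuous (fun y => Ω x y) :=
    fun x => hΩcont.comp (Continuous.prodMk_right x)
  -- membership in L²
  have hmem : ∀ x : M, MemLp (fun y => Ω x y) 2 μ := by
    intro x
    rw [memLp_two_iff_integrable_sq_norm (hcontx x).aestronglyMeasurable]
    have h := (h4int x x).re
    refine h.congr (Filter.Eventually.of_forall fun y => ?_)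
    show RCLike.re (Ω x y * Ω y x) = ‖Ω x y‖ ^ 2
    rw [h3 y x, Complex.mul_conj']
    norm_cast
  set G : M → Lp ℂ 2 μ := fun x => (hmem x).toLp _ with hG
  -- inner products of G's
  have hinner : ∀ x x' : M, (inner ℂ (G x) (G x') : ℂ) = Ω x' x := by
    intro x x'
    rw [L2.inner_def]
    have : ∀ᵐ y ∂μ, (inner ℂ ((G x : Lp ℂ 2 μ) y) ((G x' : Lp ℂ 2 μ) y) : ℂ)
        = Ω x' y * Ω y x := by
      filter_upwards [(hmem x).coeFn_toLp, (hmem x').coeFn_toLp] with y hy hy'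
      rw [hy, hy', RCLike.inner_apply, ← h3 y x, mul_comm]
    rw [integral_congr_ae this, h4]
  have hnormG : ∀ x : M, ‖G x‖ = 1 := by
    intro x
    have h2 : ‖G x‖ ^ 2 = 1 := by
      rw [← inner_self_eq_norm_sq (𝕜 := ℂ), hinner, h1]
      simp
    nlinarith [norm_nonneg (G x)]
  -- the integral equals conj ⟪Ψ, G x⟫
  have hΦ : ∀ x : M, (∫ y, Ψ y * Ω y x ∂μ) = (starRingEnd ℂ) (inner ℂ Ψ (G x)) := by
    intro x
    rw [L2.inner_def, ← integral_conj]
    refine integral_congr_ae ?_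
    filter_upwards [(hmem x).coeFn_toLp] with y hy
    rw [hy, RCLike.inner_apply]
    simp only [map_mul, Complex.conj_conj, ← h3 y x]
    ring
  -- continuity of G
  have hGdiff : ∀ x x' : M, ‖G x' - G x‖ = Real.sqrt (2 - 2 * (Ω x x').re) := by
    intro x x'
    have hsq : ‖G x' - G x‖ ^ 2 = 2 - 2 * (Ω x x').re := by
      rw [← inner_self_eq_norm_sq (𝕜 := ℂ), inner_sub_sub_self, hinner, hinner, hinner, hinner,
        h1, h1]
      have : Ω x' x = (starRingEnd ℂ) (Ω x x') := h3 x' x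
      rw [this]
      simp [Complex.add_re, Complex.sub_re, Complex.conj_re]
      ring
    rw [← hsq, Real.sqrt_sq (norm_nonneg _)]
  have hGcont : Continuous G := by
    rw [continuous_iff_continuousAt]
    intro x
    rw [ContinuousAt, tendsto_iff_norm_sub_tendsto_zero]
    have hc : Continuous fun x' => Real.sqrt (2 - 2 * (Ω x x').re) :=
      Real.continuous_sqrt.comp
        (continuous_const.sub (continuous_const.mul (Complex.continuous_re.comp (hcontx x))))
    have htd := hc.tendsto x
    rw [show Real.sqrt (2 - 2 * (Ω x x).re) = 0 from by rw [h1]; norm_num] at htd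
    exact Filter.Tendsto.congr (fun x' => (hGdiff x x').symm) htd
  refine ⟨?_, hΨ.mono fun x h => h.symm, ?_⟩
  · have : Continuous fun x => (starRingEnd ℂ) (inner ℂ Ψ (G x)) :=
      Complex.continuous_conj.comp (Continuous.inner continuous_const hGcont)
    exact this.congr fun x => (hΦ x).symm
  · intro x
    rw [hΦ, RingHomIsometric.norm_map]
    calc ‖(inner ℂ Ψ (G x) : ℂ)‖ ≤ ‖Ψ‖ * ‖G x‖ := norm_inner_le_norm _ _
    _ = ‖Ψ‖ := by rw [hnormG, mul_one]
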